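/- For any planar rooted binary tree t with n+1 leaves, if a_i and b_i denote the number of leaves to the left and right of the i-th internal vertex respectively, then the sum of the weights a_1 b_1 + a_2 b_2 + ... + a_n b_n equals n(n+1)/2. -/
import Mathlib


/-- Planar rooted binary trees. -/
inductive BinTree : Type
  | leaf : BinTree
  | node : BinTree → BinTree → BinTree

/-- Number of leaves of a planar rooted binary tree. -/
def BinTree.leaves : BinTree → ℕ
  | .leaf => 1
  | .node l r => l.leaves + r.leaves

/-- The list of weights `aᵢ * bᵢ` of the internal vertices of a planar rooted
binary tree, read from left to right: the `i`-th internal vertex sits between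
leaves `i-1` and `i`, `aᵢ` is the number of leaves of the subtree hanging to its
left and `bᵢ` the number of leaves hanging to its right. -/
def BinTree.weights : BinTree → List ℕ
  | .leaf => []
  | .node l r => l.weights ++ [l.leaves * r.leaves] ++ r.weights

/-- Loday's lemma: for a planar rooted binary tree with `n+1` leaves, the sum of
the weights of its `n` internal vertices is `n(n+1)/2`. -/
lemma weights_aux (t : BinTree) :
    2 * t.weights.sum + t.leaves = t.leaves * t.leaves := by
  induction t with
  | leaf => simp [BinTree.weights, BinTree.leaves]
  | node l r hl hr =>
    simp only [BinTree.weights, BinTree.leaves, List.sum_append, List.sum_cons,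
      List.sum_nil] at *
    nlinarith

theorem weights_sum (n : ℕ) (t : BinTree) (h : t.leaves = n + 1) :
    t.weights.sum = n * (n + 1) / 2 := by
  have := weights_aux t
  rw [h] at this
  have h2 : 2 * t.weights.sum = n * (n + 1) := by nlinarith
  omega
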